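/- Let F_q be a finite field and A, B ⊆ F_q with |A|·|B| > q. Suppose there exists a ∈ −A with a ∉ A + A, or there exists b ∈ −B with b ∉ B + B. Then 10·(AB) = F_q. -/

import Mathlib

open Finset

section glibichuk

variable {F : Type*} [Field F] [Fintype F] [DecidableEq F]

-- Cauchy-Schwarz fiber lemma
lemma cs_fiber {α β : Type*} [DecidableEq α] [DecidableEq β] (s : Finset α) (f : α → β) :
    s.card ^ 2 ≤ (s.image f).card *
      ((s ×ˢ s).filter (fun p => f p.1 = f p.2)).card := by
  have h1 : s.card = ∑ y ∈ s.image f, (s.filter (fun x => f x = y)).card :=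
    card_eq_sum_card_fiberwise (fun x hx => mem_image_of_mem f hx)
  have h2 : ((s ×ˢ s).filter (fun p => f p.1 = f p.2)).card
      = ∑ y ∈ s.image f, ((s.filter (fun x => f x = y)).card) ^ 2 := by
    rw [card_eq_sum_card_fiberwise (f := fun p => f p.1) (t := s.image f) ?_]
    · refine sum_congr rfl fun y hy => ?_
      have he : ((s ×ˢ s).filter (fun p => f p.1 = f p.2)).filter (fun p => f p.1 = y)
          = (s.filter (fun x => f x = y)) ×ˢ (s.filter (fun x => f x = y)) := by
        ext p
        simp only [mem_filter, mem_product]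
        constructor
        · rintro ⟨⟨⟨h1', h2'⟩, h3⟩, h4⟩
          exact ⟨⟨h1', h4⟩, ⟨h2', h3 ▸ h4⟩⟩
        · rintro ⟨⟨h1', h2'⟩, ⟨h3, h4⟩⟩
          exact ⟨⟨⟨h1', h3⟩, h2'.trans h4.symm⟩, h2'⟩
      rw [he, card_product, sq]
    · intro p hp
      simp only [Finset.mem_coe, mem_filter, mem_product] at hp
      exact mem_image_of_mem f hp.1.1
  calc s.card ^ 2 = (∑ y ∈ s.image f, (s.filter (fun x => f x = y)).card) ^ 2 := by rw [h1]
    _ ≤ (s.image f).card * ∑ y ∈ s.image f, ((s.filter (fun x => f x = y)).card) ^ 2 :=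
        sq_sum_le_card_mul_sum_sq
    _ = _ := by rw [h2]

-- covering lemma
lemma cover {F : Type*} [AddCommGroup F] [Fintype F] [DecidableEq F] (S T : Finset F)
    (h : Fintype.card F < S.card + T.card) (x : F) : ∃ s ∈ S, ∃ t ∈ T, s + t = x := by
  have hT : (T.image (fun t => x - t)).card = T.card :=
    card_image_of_injective _ (fun a b hab => by
      have : x - a = x - b := hab
      exact sub_right_injective this)
  have hne : (S ∩ T.image (fun t => x - t)).Nonempty := by
    rw [← card_pos]
    by_contra hc
    push_neg at hc
    interval_cases hin : (S ∩ T.image (fun t => x - t)).card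
    · have := card_union_add_card_inter S (T.image (fun t => x - t))
      rw [hin, add_zero] at this
      have hle : (S ∪ T.image (fun t => x - t)).card ≤ Fintype.card F := card_le_univ _
      omega
  obtain ⟨y, hy⟩ := hne
  rw [mem_inter, mem_image] at hy
  obtain ⟨hyS, t, htT, hty⟩ := hy
  exact ⟨y, hyS, t, htT, by rw [← hty]; abel⟩

lemma energy_sum (A B : Finset F) :
    ∑ d : F, (((B ×ˢ A) ×ˢ (B ×ˢ A)).filter
        (fun p => p.1.1 - p.2.1 = d * (p.2.2 - p.1.2))).card
      ≤ Fintype.card F * (B.card * A.card) + (B.card * A.card) ^ 2 := by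
  classical
  set Q := (B ×ˢ A) ×ˢ (B ×ˢ A) with hQ
  have hswap : ∀ d : F, (Q.filter (fun p => p.1.1 - p.2.1 = d * (p.2.2 - p.1.2))).card
      = ∑ p ∈ Q, (if p.1.1 - p.2.1 = d * (p.2.2 - p.1.2) then 1 else 0) := by
    intro d; rw [card_filter]
  calc ∑ d : F, (Q.filter (fun p => p.1.1 - p.2.1 = d * (p.2.2 - p.1.2))).card
      = ∑ d : F, ∑ p ∈ Q, (if p.1.1 - p.2.1 = d * (p.2.2 - p.1.2) then 1 else 0) := by
        exact sum_congr rfl (fun d _ => hswap d)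
    _ = ∑ p ∈ Q, ∑ d : F, (if p.1.1 - p.2.1 = d * (p.2.2 - p.1.2) then 1 else 0) :=
        sum_comm
    _ = ∑ p ∈ Q, ((univ : Finset F).filter
          (fun d => p.1.1 - p.2.1 = d * (p.2.2 - p.1.2))).card := by
        exact sum_congr rfl (fun p _ => (card_filter _ _).symm)
    _ ≤ ∑ p ∈ Q, (if p.2 = p.1 then Fintype.card F else 1) := by
        refine sum_le_sum fun p hp => ?_
        by_cases h1 : p.2 = p.1
        · simp only [h1, if_true]
          exact (card_filter_le _ _).trans (le_of_eq (card_univ))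
        · simp only [h1, if_false]
          by_cases h2 : p.2.2 = p.1.2
          · have : ((univ : Finset F).filter
                (fun d => p.1.1 - p.2.1 = d * (p.2.2 - p.1.2))) = ∅ := by
              refine filter_eq_empty_iff.mpr fun d _ => ?_
              intro hc
              rw [h2, sub_self, mul_zero, sub_eq_zero] at hc
              exact h1 (Prod.ext hc.symm h2)
            rw [this]; simp
          · refine card_le_one.mpr fun d hd e he => ?_
            rw [mem_filter] at hd he
            have hα : p.2.2 - p.1.2 ≠ 0 := sub_ne_zero.mpr h2
            have := hd.2.symm.trans he.2
            exact mul_right_cancel₀ hα this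
    _ = Fintype.card F * (Q.filter (fun p => p.2 = p.1)).card
          + (Q.filter (fun p => ¬ p.2 = p.1)).card := by
        rw [sum_ite, sum_const, sum_const, smul_eq_mul, smul_eq_mul, mul_one, mul_comm]
    _ ≤ Fintype.card F * (B.card * A.card) + (B.card * A.card) ^ 2 := by
        have hdiag : (Q.filter (fun p => p.2 = p.1)).card = B.card * A.card := by
          have himg : Q.filter (fun p => p.2 = p.1)
              = (B ×ˢ A).image (fun u => (u, u)) := by
            ext p
            simp only [mem_filter, mem_image, hQ, mem_product]
            constructor
            · rintro ⟨⟨h1', h2'⟩, h3⟩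
              exact ⟨p.1, h1', by simp [Prod.ext_iff, h3]⟩
            · rintro ⟨u, hu, h3⟩
              rw [← h3]; exact ⟨⟨hu, hu⟩, rfl⟩
          rw [himg, card_image_of_injective _ (fun a b hab => (Prod.mk.injEq _ _ _ _).mp hab |>.1),
            card_product]
        have hoff : (Q.filter (fun p => ¬ p.2 = p.1)).card ≤ (B.card * A.card) ^ 2 := by
          calc (Q.filter (fun p => ¬ p.2 = p.1)).card ≤ Q.card := card_filter_le _ _
            _ = (B.card * A.card) ^ 2 := by
                rw [hQ, card_product, card_product]; ring
        rw [hdiag]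
        exact Nat.add_le_add_left hoff _

open Pointwise in
lemma key (A B : Finset F) (hcard : Fintype.card F < A.card * B.card)
    (a0 : F) (ha0 : a0 ∈ A) (hna : -a0 ∉ A + A) (x : F) :
    ∃ a b : Fin 10 → F, (∀ i, a i ∈ A) ∧ (∀ i, b i ∈ B) ∧ x = ∑ i, a i * b i := by
  classical
  set q := Fintype.card F with hqdef
  set n := B.card * A.card with hndef
  have hn : q < n := by rw [hndef, mul_comm]; exact hcard
  set E : F → ℕ := fun d => (((B ×ˢ A) ×ˢ (B ×ˢ A)).filter
      (fun p => p.1.1 - p.2.1 = d * (p.2.2 - p.1.2))).card with hE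
  -- choose a good d
  have hgood : ∃ d : F, q * E d ≤ q * n + n ^ 2 := by
    by_contra hc
    push_neg at hc
    have h1 : ∑ _d : F, (q * n + n ^ 2) < ∑ d : F, q * E d := by
      refine sum_lt_sum_of_nonempty univ_nonempty fun d _ => hc d
    rw [sum_const, card_univ, ← mul_sum, smul_eq_mul, ← hqdef] at h1
    have h2 : q * ∑ d : F, E d ≤ q * (q * n + n ^ 2) :=
      Nat.mul_le_mul_left q (energy_sum A B)
    have h3 : q * (q * n + n ^ 2) = q * (q * n + n ^ 2) := rfl
    omega
  obtain ⟨d, hd⟩ := hgood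
  set P := (B ×ˢ A).image (fun p => p.1 + d * p.2) with hP
  set M := (B ×ˢ A).image (fun p => p.1 - d * p.2) with hM
  -- CS bounds
  have hcsP : n ^ 2 ≤ P.card * E d := by
    have h0 := cs_fiber (B ×ˢ A) (fun p => p.1 + d * p.2)
    rw [card_product] at h0
    have heq : (((B ×ˢ A) ×ˢ (B ×ˢ A)).filter
          (fun p => p.1.1 + d * p.1.2 = p.2.1 + d * p.2.2))
        = ((B ×ˢ A) ×ˢ (B ×ˢ A)).filter
          (fun p => p.1.1 - p.2.1 = d * (p.2.2 - p.1.2)) := by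
      refine filter_congr fun p _ => ?_
      constructor <;> intro h' <;> linear_combination h'
    rw [heq] at h0
    exact h0
  have hcsM : n ^ 2 ≤ M.card * E d := by
    have h0 := cs_fiber (B ×ˢ A) (fun p => p.1 - d * p.2)
    rw [card_product] at h0
    have heq : (((B ×ˢ A) ×ˢ (B ×ˢ A)).filter
          (fun p => p.1.1 - d * p.1.2 = p.2.1 - d * p.2.2))
        = ((B ×ˢ A) ×ˢ (B ×ˢ A)).filter
          (fun p => p.1.1 - p.2.1 = d * (p.1.2 - p.2.2)) := by
      refine filter_congr fun p _ => ?_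
      constructor <;> intro h' <;> linear_combination h'
    rw [heq] at h0
    have hbij : (((B ×ˢ A) ×ˢ (B ×ˢ A)).filter
          (fun p => p.1.1 - p.2.1 = d * (p.1.2 - p.2.2))).card
        = (((B ×ˢ A) ×ˢ (B ×ˢ A)).filter
          (fun p => p.1.1 - p.2.1 = d * (p.2.2 - p.1.2))).card := by
      refine card_nbij' (fun p => ((p.2.1, p.1.2), (p.1.1, p.2.2)))
        (fun p => ((p.2.1, p.1.2), (p.1.1, p.2.2))) ?_ ?_ ?_ ?_
      · intro p hp
        simp only [Finset.mem_coe, mem_filter, mem_product] at hp ⊢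
        obtain ⟨⟨⟨hb, ha⟩, ⟨hb', ha'⟩⟩, hcond⟩ := hp
        exact ⟨⟨⟨hb', ha⟩, ⟨hb, ha'⟩⟩, by linear_combination -hcond⟩
      · intro p hp
        simp only [Finset.mem_coe, mem_filter, mem_product] at hp ⊢
        obtain ⟨⟨⟨hb, ha⟩, ⟨hb', ha'⟩⟩, hcond⟩ := hp
        exact ⟨⟨⟨hb', ha⟩, ⟨hb, ha'⟩⟩, by linear_combination -hcond⟩
      · intro p _; rfl
      · intro p _; rfl
    rw [hbij] at h0
    exact h0
  -- size bounds
  have harith : ∀ h' : ℕ, n ^ 2 ≤ h' * E d → q + 1 ≤ 2 * h' := by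
    intro h' hh
    by_contra hc
    push_neg at hc
    have h2h : 2 * h' ≤ q := by omega
    have c1 : q * n ^ 2 ≤ h' * (q * E d) := by
      calc q * n ^ 2 ≤ q * (h' * E d) := Nat.mul_le_mul_left q hh
        _ = h' * (q * E d) := by ring
    have c2 : h' * (q * E d) ≤ h' * (q * n + n ^ 2) := Nat.mul_le_mul_left h' hd
    have c3 : 2 * (q * n ^ 2) ≤ q * (q * n + n ^ 2) := by
      calc 2 * (q * n ^ 2) ≤ 2 * (h' * (q * n + n ^ 2)) := by omega
        _ = (2 * h') * (q * n + n ^ 2) := by ring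
        _ ≤ q * (q * n + n ^ 2) := Nat.mul_le_mul_right _ h2h
    have hq0 : 0 < q := Fintype.card_pos
    nlinarith [hn, hq0]
  have hPc : q + 1 ≤ 2 * P.card := harith P.card hcsP
  have hMc : q + 1 ≤ 2 * M.card := harith M.card hcsM
  -- collision 1 : d*(a0+a1+a2) = b1+b2
  obtain ⟨s1, hs1, t1, ht1, hst1⟩ := cover M M (by omega) (d * a0)
  rw [hM, mem_image] at hs1 ht1
  obtain ⟨⟨b1, a1⟩, hp1, he1⟩ := hs1
  obtain ⟨⟨b2, a2⟩, hp2, he2⟩ := ht1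
  rw [mem_product] at hp1 hp2
  have hcol1 : d * (a0 + a1 + a2) = b1 + b2 := by linear_combination -he1 - he2 - hst1
  have hlam1 : a0 + a1 + a2 ≠ 0 := by
    intro h0
    exact hna (Finset.mem_add.mpr ⟨a1, hp1.2, a2, hp2.2, by linear_combination h0⟩)
  -- collision 2 : d*(a0+a3+a4) = -(b3+b4)
  obtain ⟨s2, hs2, t2, ht2, hst2⟩ := cover P P (by omega) (-(d * a0))
  rw [hP, mem_image] at hs2 ht2
  obtain ⟨⟨b3, a3⟩, hp3, he3⟩ := hs2
  obtain ⟨⟨b4, a4⟩, hp4, he4⟩ := ht2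
  rw [mem_product] at hp3 hp4
  have hcol2 : d * (a0 + a3 + a4) = -(b3 + b4) := by linear_combination he3 + he4 + hst2
  have hlam2 : a0 + a3 + a4 ≠ 0 := by
    intro h0
    exact hna (Finset.mem_add.mpr ⟨a3, hp3.2, a4, hp4.2, by linear_combination h0⟩)
  -- final covering
  set S := P.image (fun z => (a0 + a1 + a2) * z) with hS
  set T := M.image (fun z => (a0 + a3 + a4) * z) with hT
  have hScard : S.card = P.card :=
    card_image_of_injective _ (mul_right_injective₀ hlam1)
  have hTcard : T.card = M.card :=
    card_image_of_injective _ (mul_right_injective₀ hlam2)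
  obtain ⟨s, hs, t, ht, hst⟩ := cover S T (by omega) x
  rw [hS, mem_image] at hs
  rw [hT, mem_image] at ht
  obtain ⟨z1, hz1P, hseq⟩ := hs
  obtain ⟨z2, hz2M, hteq⟩ := ht
  rw [hP, mem_image] at hz1P
  rw [hM, mem_image] at hz2M
  obtain ⟨⟨b5, a5⟩, hp5, he5⟩ := hz1P
  obtain ⟨⟨b6, a6⟩, hp6, he6⟩ := hz2M
  rw [mem_product] at hp5 hp6
  refine ⟨![a0, a1, a2, a5, a5, a0, a3, a4, a6, a6],
    ![b5, b5, b5, b1, b2, b6, b6, b6, b3, b4], fun i => ?_, fun i => ?_, ?_⟩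
  · fin_cases i <;>
      simp only [Matrix.cons_val_zero, Matrix.cons_val_one, Matrix.head_cons,
        Matrix.cons_val_succ] <;>
      first
        | exact ha0
        | exact hp1.2
        | exact hp2.2
        | exact hp3.2
        | exact hp4.2
        | exact hp5.2
        | exact hp6.2
  · fin_cases i <;>
      simp only [Matrix.cons_val_zero, Matrix.cons_val_one, Matrix.head_cons,
        Matrix.cons_val_succ] <;>
      first
        | exact hp1.1
        | exact hp2.1
        | exact hp3.1
        | exact hp4.1
        | exact hp5.1
        | exact hp6.1
  · have hexp : (∑ i : Fin 10,
        ![a0, a1, a2, a5, a5, a0, a3, a4, a6, a6] i *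
        ![b5, b5, b5, b1, b2, b6, b6, b6, b3, b4] i)
        = a0*b5 + a1*b5 + a2*b5 + a5*b1 + a5*b2 + a0*b6 + a3*b6 + a4*b6 + a6*b3 + a6*b4 := by
      simp [Fin.sum_univ_succ]
      ring
    rw [hexp]
    linear_combination -hst - hseq - hteq - (a0+a1+a2) * he5 - (a0+a3+a4) * he6
      + a5 * hcol1 - a6 * hcol2

end glibichuk


open Pointwise in
theorem stmt_6 {F : Type*} [Field F] [Fintype F] [DecidableEq F] (q : ℕ)
    (hq : Fintype.card F = q) (A B : Finset F) (h : q < A.card * B.card)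
    (hab : (∃ a ∈ -A, a ∉ A + A) ∨ (∃ b ∈ -B, b ∉ B + B)) :
    ∀ x : F, ∃ a b : Fin 10 → F, (∀ i, a i ∈ A) ∧ (∀ i, b i ∈ B) ∧
      x = ∑ i, a i * b i := by
  intro x
  subst hq
  rcases hab with ⟨a, haA, hnot⟩ | ⟨b, hbB, hnot⟩
  · rw [Finset.mem_neg] at haA
    obtain ⟨a0, ha0, hneg⟩ := haA
    have hna : -a0 ∉ A + A := by rwa [hneg]
    exact key A B h a0 ha0 hna x
  · rw [Finset.mem_neg] at hbB
    obtain ⟨b0, hb0, hneg⟩ := hbB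
    have hnb : -b0 ∉ B + B := by rwa [hneg]
    obtain ⟨av, bv, hA', hB', hsum⟩ := key B A (by rw [mul_comm]; exact h) b0 hb0 hnb x
    exact ⟨bv, av, hB', hA', by
      rw [hsum]; exact Finset.sum_congr rfl fun i _ => mul_comm _ _⟩
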